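/- Let C be a monoidal category whose hom-sets carry a k-linear structure, C' ⊆ C a monoidal subcategory, and suppose given natural associative unital operations ⊛ : Hom_C(A,V) ⊗ Hom_C(B,W) → Hom_C(A⊗B, V⊗W) for A, B ∈ C, V, W ∈ C' (natural meaning (φ∘α) ⊛ (ψ∘β) = (φ ⊛ ψ) ∘ (α⊗β); unital meaning φ ⊛ (ι∘χ) = φ ⊗ χ and (ι∘χ) ⊛ φ = χ ⊗ φ for morphisms χ into the unit object). Then the family F_{V,W} := id_V ⊛ id_W ∈ End_C(V⊗W) satisfies the cocycle condition F_{U⊗V,W} ∘ (F_{U,V} ⊗ id_W) = F_{U,V⊗W} ∘ (id_U ⊗ F_{V,W}) and the normalization F_{V,1} = id_V = F_{1,V}. -/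

import Mathlib

/-!
STATEMENT 8: Let `C` be a monoidal category with `k`-linear hom-sets, `C' ⊆ C` a monoidal
subcategory (given by a class of objects `P` containing the unit and closed under tensor
products), and `⊛` a natural, associative, unital family of (bilinear) operations
`Hom(A,V) ⊗ Hom(B,W) → Hom(A⊗B, V⊗W)` for `V, W ∈ C'`.  Then the family
`F_{V,W} := id_V ⊛ id_W` satisfies the cocycle condition and the normalization
`F_{V,1} = id = F_{1,V}`.
-/

open CategoryTheory MonoidalCategory

universe v u

theorem statement8 {k : Type*} [Ring k]
    {C : Type u} [Category.{v} C] [MonoidalCategory C]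
    [Preadditive C] [CategoryTheory.Linear k C]
    -- the monoidal subcategory `C'`, given by its class of objects:
    (P : C → Prop) (hP1 : P (𝟙_ C)) (hPmul : ∀ {V W : C}, P V → P W → P (V ⊗ W))
    -- the operation `⊛`:
    (op : ∀ {A B V W : C}, (A ⟶ V) → (B ⟶ W) → (A ⊗ B ⟶ V ⊗ W))
    -- bilinearity:
    (hbil : ∀ {A B V W : C}, P V → P W → ∀ (c : k) (φ φ' : A ⟶ V) (ψ : B ⟶ W),
      op (c • φ + φ') ψ = c • op φ ψ + op φ' ψ ∧
      op ψ (c • φ + φ') = c • op ψ φ + op ψ φ')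
    -- naturality with respect to the `C`-arguments:
    (hnat : ∀ {A' B' A B V W : C}, P V → P W →
      ∀ (α : A' ⟶ A) (β : B' ⟶ B) (φ : A ⟶ V) (ψ : B ⟶ W),
      op (α ≫ φ) (β ≫ ψ) = (α ⊗ₘ β) ≫ op φ ψ)
    -- associativity (with the associator inserted):
    (hassoc : ∀ {A B D V W U : C}, P V → P W → P U →
      ∀ (φ : A ⟶ V) (ψ : B ⟶ W) (ϑ : D ⟶ U),
      (α_ A B D).hom ≫ op φ (op ψ ϑ) = op (op φ ψ) ϑ ≫ (α_ V W U).hom)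
    -- unitality:
    (hunit : ∀ {A B V : C}, P V → ∀ (φ : A ⟶ V) (χ : B ⟶ 𝟙_ C),
      op φ χ = φ ⊗ₘ χ ∧ op χ φ = χ ⊗ₘ φ) :
    -- then `F_{V,W} := id_V ⊛ id_W` is a normalized cocycle on `C'`:
    (∀ {U V W : C}, P U → P V → P W →
      ((op (𝟙 U) (𝟙 V) : U ⊗ V ⟶ U ⊗ V) ▷ W) ≫ (op (𝟙 (U ⊗ V)) (𝟙 W)) ≫ (α_ U V W).hom
        = (α_ U V W).hom ≫ (U ◁ (op (𝟙 V) (𝟙 W) : V ⊗ W ⟶ V ⊗ W)) ≫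
            (op (𝟙 U) (𝟙 (V ⊗ W)))) ∧
    (∀ {V : C}, P V →
      (op (𝟙 V) (𝟙 (𝟙_ C)) : V ⊗ 𝟙_ C ⟶ V ⊗ 𝟙_ C) = 𝟙 _ ∧
      (op (𝟙 (𝟙_ C)) (𝟙 V) : 𝟙_ C ⊗ V ⟶ 𝟙_ C ⊗ V) = 𝟙 _) := by
  constructor
  · intro U V W hU hV hW
    have h1 : ((op (𝟙 U) (𝟙 V) : U ⊗ V ⟶ U ⊗ V) ▷ W) ≫ (op (𝟙 (U ⊗ V)) (𝟙 W))
        = op (op (𝟙 U) (𝟙 V)) (𝟙 W) := by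
      rw [← tensorHom_id, ← hnat (hPmul hU hV) hW, Category.comp_id, Category.comp_id]
    have h2 : (U ◁ (op (𝟙 V) (𝟙 W) : V ⊗ W ⟶ V ⊗ W)) ≫ (op (𝟙 U) (𝟙 (V ⊗ W)))
        = op (𝟙 U) (op (𝟙 V) (𝟙 W)) := by
      rw [← id_tensorHom, ← hnat hU (hPmul hV hW), Category.comp_id, Category.comp_id]
    rw [reassoc_of% h1, h2, hassoc hU hV hW]
  · intro V hV
    constructor
    · rw [(hunit hV (𝟙 V) (𝟙 (𝟙_ C))).1, tensorHom_id, id_whiskerRight]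
    · rw [(hunit hV (𝟙 V) (𝟙 (𝟙_ C))).2, id_tensorHom, MonoidalCategory.whiskerLeft_id]
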